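/- Let f : ℝ → ℝ be continuous and bounded, differentiable with derivative f' ≥ 0, and let {t_i} be a sequence with t_i → ∞. Suppose there exist δ > 0 and a subsequence t_{i_j} with f'(t_{i_j}) ≥ δ² for all j. Then there exists a sequence τ_n → ∞ with |τ_n − t_{i_{j_n}}| ≤ 1/√n for a further subsequence t_{i_{j_n}} and f'(τ_n) < 1/√n. -/

import Mathlib

open Filter

lemma mvt_aux18 (f : ℝ → ℝ) (hfc : Continuous f) (hfd : Differentiable ℝ f) (a b r : ℝ)
    (hab : a ≤ b) (h : ∀ x ∈ Set.Icc a b, r ≤ deriv f x) : r * (b - a) ≤ f b - f a := by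
  set g : ℝ → ℝ := fun s => f s - r * s with hg
  have hder : ∀ x, HasDerivAt g (deriv f x - r) x := fun x => by
    have h := ((hfd x).hasDerivAt.sub ((hasDerivAt_id x).const_mul r)); rw [mul_one] at h; exact h
  have hmono : MonotoneOn g (Set.Icc a b) := by
    apply monotoneOn_of_deriv_nonneg (convex_Icc a b)
    · exact ((hfc.sub (continuous_const.mul continuous_id)).continuousOn)
    · intro x _
      exact ((hder x).differentiableAt.differentiableWithinAt)
    · intro x hx
      rw [interior_Icc] at hx
      rw [(hder x).deriv]
      have := h x ⟨hx.1.le, hx.2.le⟩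
      linarith
  have := hmono ⟨le_refl a, hab⟩ ⟨hab, le_refl b⟩ hab
  simp only [hg] at this
  nlinarith

/-- Abstract version of Lemma 2.5: if `f` is continuous, bounded, differentiable with
`f' ≥ 0`, `t_i → ∞`, and along a subsequence `f'(t_{i_j}) ≥ δ²`, then there are a further
subsequence and times `τ_n → ∞` with `|τ_n − t_{i_{j_n}}| ≤ 1/√(n+1)` and
`f'(τ_n) < 1/√(n+1)`. -/
theorem stmt18 (f : ℝ → ℝ) (hfc : Continuous f)
    (hfb : ∃ M : ℝ, ∀ s, |f s| ≤ M)
    (hfd : Differentiable ℝ f) (hf' : ∀ s, 0 ≤ deriv f s)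
    (t : ℕ → ℝ) (ht : Filter.Tendsto t Filter.atTop Filter.atTop)
    (δ : ℝ) (hδ : 0 < δ) (j : ℕ → ℕ) (hj : StrictMono j)
    (hj' : ∀ k, δ ^ 2 ≤ deriv f (t (j k))) :
    ∃ (jn : ℕ → ℕ) (τ : ℕ → ℝ), StrictMono jn ∧
      Filter.Tendsto τ Filter.atTop Filter.atTop ∧
      ∀ n : ℕ, |τ n - t (j (jn n))| ≤ 1 / Real.sqrt (n + 1) ∧
        deriv f (τ n) < 1 / Real.sqrt (n + 1) := by
  obtain ⟨M, hM⟩ := hfb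
  have hmono : Monotone f := monotone_of_deriv_nonneg hfd hf'
  have hbdd : BddAbove (Set.range f) := by
    refine ⟨M, ?_⟩
    rintro _ ⟨s, rfl⟩
    exact (abs_le.mp (hM s)).2
  set L : ℝ := ⨆ s, f s with hLdef
  have hL : Tendsto f atTop (nhds L) := tendsto_atTop_ciSup hmono hbdd
  have hfle : ∀ s, f s ≤ L := fun s => le_ciSup hbdd s
  set r : ℕ → ℝ := fun n => 1 / Real.sqrt (n + 1) with hrdef
  have hrpos : ∀ n, 0 < r n := fun n => by
    have : (0:ℝ) < Real.sqrt (n + 1) := Real.sqrt_pos.mpr (by positivity)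
    positivity
  have hrle1 : ∀ n, r n ≤ 1 := fun n => by
    have h1 : (1:ℝ) ≤ Real.sqrt (n + 1) :=
      Real.one_le_sqrt.mpr (by push_cast; linarith)
    rw [hrdef]
    simp only []
    rw [div_le_one (by linarith)]
    exact h1
  -- key existence, eventually in k
  have hQ : ∀ n : ℕ, ∃ K : ℕ, ∀ k ≥ K,
      ∃ τ, |τ - t (j k)| ≤ r n ∧ deriv f τ < r n := by
    intro n
    have htend : Tendsto (fun k => t (j k) - r n) atTop atTop := by
      have := tendsto_atTop_add_const_right atTop (-(r n)) (ht.comp hj.tendsto_atTop)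
      simpa [sub_eq_add_neg] using this
    have hev : ∀ᶠ k in atTop, L - 2 * (r n) ^ 2 < f (t (j k) - r n) := by
      have hlt : L - 2 * (r n) ^ 2 < L := by nlinarith [hrpos n]
      exact (hL.comp htend).eventually (eventually_gt_nhds hlt)
    obtain ⟨K, hK⟩ := eventually_atTop.mp hev
    refine ⟨K, fun k hk => ?_⟩
    by_contra hcon
    push_neg at hcon
    have hIcc : ∀ x ∈ Set.Icc (t (j k) - r n) (t (j k) + r n), r n ≤ deriv f x := by
      intro x hx
      refine hcon x (abs_le.mpr ⟨by linarith [hx.1], by linarith [hx.2]⟩)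
    have hmvt := mvt_aux18 f hfc hfd (t (j k) - r n) (t (j k) + r n) (r n)
      (by linarith [hrpos n]) hIcc
    have h1 := hK k hk
    have h2 := hfle (t (j k) + r n)
    nlinarith [hrpos n]
  choose K hK using hQ
  set jn : ℕ → ℕ := fun n => Nat.rec (K 0) (fun m ih => max (K (m + 1)) (ih + 1)) n
    with hjndef
  have hjnK : ∀ n, K n ≤ jn n := by
    intro n
    cases n with
    | zero => exact le_refl _
    | succ m => exact le_max_left _ _
  have hjnmono : StrictMono jn :=
    strictMono_nat_of_lt_succ fun n =>
      lt_of_lt_of_le (Nat.lt_succ_self _) (le_max_right _ _)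
  have hτex : ∀ n, ∃ τ, |τ - t (j (jn n))| ≤ r n ∧ deriv f τ < r n :=
    fun n => hK n (jn n) (hjnK n)
  choose τ hτ using hτex
  refine ⟨jn, τ, hjnmono, ?_, fun n => hτ n⟩
  have hlow : Tendsto (fun n => t (j (jn n)) - 1) atTop atTop := by
    have := tendsto_atTop_add_const_right atTop (-(1:ℝ))
      (ht.comp ((hj.comp hjnmono).tendsto_atTop))
    simpa [sub_eq_add_neg, Function.comp] using this
  refine tendsto_atTop_mono (fun n => ?_) hlow
  have h1 := (abs_le.mp (hτ n).1).1
  have := hrle1 n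
  linarith
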